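/- For every n ≥ 2 one has u_n ≥ u_{n−1} + K; that is, consecutive exploration phases of the diminishing-exploration schedule, each of length K, do not overlap. -/

import Mathlib

/-- For the diminishing-exploration schedule `u` (with parameters
`K ≥ 1`, `α > 0`, `u 1 = ⌈(α − K/(4α))²⌉` and
`u n = ⌈u (n−1) + (K/α)·√(u (n−1)) + K²/(4α²)⌉` for `n ≥ 2`), one has
`u n ≥ u (n−1) + K` for every `n ≥ 2`: consecutive exploration phases, each of
length `K`, do not overlap. -/
theorem diminishing_exploration_phases_do_not_overlap
    (K α : ℝ) (hK : 1 ≤ K) (hα : 0 < α) (u : ℕ → ℝ)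
    (h1 : u 1 = ((⌈(α - K / (4 * α)) ^ 2⌉ : ℤ) : ℝ))
    (hrec : ∀ n : ℕ, 2 ≤ n →
      u n = ((⌈u (n - 1) + (K / α) * Real.sqrt (u (n - 1)) + K ^ 2 / (4 * α ^ 2)⌉ : ℤ) : ℝ)) :
    ∀ n : ℕ, 2 ≤ n → u (n - 1) + K ≤ u n := by
  have hK0 : 0 ≤ K := le_trans zero_le_one hK
  -- Key invariant: for all m ≥ 1, u m ≥ 0 and √(u m) ≥ α - K/(4α)
  have key : ∀ m : ℕ, 1 ≤ m → 0 ≤ u m ∧ α - K / (4 * α) ≤ Real.sqrt (u m) := by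
    intro m
    induction m with
    | zero => intro h; omega
    | succ k ih =>
      intro _
      rcases Nat.eq_zero_or_pos k with hk0 | hk1
      · -- base case: m = 1
        subst hk0
        have hge : (α - K / (4 * α)) ^ 2 ≤ u 1 := by
          rw [h1]; exact Int.le_ceil _
        have h0 : 0 ≤ u 1 := le_trans (sq_nonneg _) hge
        refine ⟨h0, ?_⟩
        have := Real.sqrt_le_sqrt hge
        rw [Real.sqrt_sq_eq_abs] at this
        exact le_trans (le_abs_self _) this
      · obtain ⟨h0, hs⟩ := ih hk1
        have hrk : u (k + 1) =
            ((⌈u k + (K / α) * Real.sqrt (u k) + K ^ 2 / (4 * α ^ 2)⌉ : ℤ) : ℝ) := by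
          have := hrec (k + 1) (by omega)
          simpa using this
        have hge : u k + (K / α) * Real.sqrt (u k) + K ^ 2 / (4 * α ^ 2) ≤ u (k + 1) := by
          rw [hrk]; exact Int.le_ceil _
        have hsq : (Real.sqrt (u k) + K / (2 * α)) ^ 2
            = u k + (K / α) * Real.sqrt (u k) + K ^ 2 / (4 * α ^ 2) := by
          have h2 : Real.sqrt (u k) ^ 2 = u k := Real.sq_sqrt h0
          field_simp
          ring_nf
          nlinarith [h2, pow_pos hα 5, pow_pos hα 4, pow_pos hα 3]
        have hge2 : (Real.sqrt (u k) + K / (2 * α)) ^ 2 ≤ u (k + 1) := by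
          rw [hsq]; exact hge
        have h0' : 0 ≤ u (k + 1) := le_trans (sq_nonneg _) hge2
        refine ⟨h0', ?_⟩
        have hnn : 0 ≤ Real.sqrt (u k) + K / (2 * α) := by positivity
        have := Real.sqrt_le_sqrt hge2
        rw [Real.sqrt_sq_eq_abs, abs_of_nonneg hnn] at this
        have hK2 : 0 ≤ K / (2 * α) := by positivity
        linarith
  intro n hn
  obtain ⟨h0, hs⟩ := key (n - 1) (by omega)
  have hge : u (n - 1) + (K / α) * Real.sqrt (u (n - 1)) + K ^ 2 / (4 * α ^ 2) ≤ u n := by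
    rw [hrec n hn]; exact Int.le_ceil _
  have hmul : K / α * (α - K / (4 * α)) ≤ K / α * Real.sqrt (u (n - 1)) :=
    mul_le_mul_of_nonneg_left hs (by positivity)
  have heq : K / α * (α - K / (4 * α)) = K - K ^ 2 / (4 * α ^ 2) := by
    field_simp
  rw [heq] at hmul
  linarith
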